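/- In a weighted voting game, if w_i ≥ w_j then TB_i ≥ TB_j; i.e., the Banzhaf index is monotone in the voting weight. -/

import Mathlib

open Finset

/-- Total Banzhaf count of voter `i` in the weighted voting game with weights `w`
and quota `q`. -/
noncomputable def TBw {n : ℕ} (w : Fin n → ℝ) (q : ℝ) (i : Fin n) : ℕ :=
  (((univ.erase i).powerset).filter
    (fun S => ∑ j ∈ S, w j < q ∧ q ≤ w i + ∑ j ∈ S, w j)).card

/-- The Banzhaf count is monotone in the voting weight: a voter with larger
weight has at least as large a total Banzhaf count. -/
theorem banzhaf_monotone_in_weight {n : ℕ} (w : Fin n → ℝ) (q : ℝ)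
    (hw : ∀ k, 0 ≤ w k) (i j : Fin n) (hij : w j ≤ w i) :
    TBw w q j ≤ TBw w q i := by
  rcases eq_or_ne i j with rfl | hne
  · exact le_rfl
  unfold TBw
  apply Finset.card_le_card_of_injOn
    (fun S => if i ∈ S then insert j (S.erase i) else S)
  · intro S hS
    simp only [mem_coe, mem_filter, mem_powerset] at hS
    obtain ⟨hsub, hlt, hge⟩ := hS
    have hjS : j ∉ S := fun h => (mem_erase.mp (hsub h)).1 rfl
    by_cases hiS : i ∈ S
    · have hji : j ∉ S.erase i := fun h => hjS (mem_of_mem_erase h)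
      have hsum : ∑ k ∈ insert j (S.erase i), w k = w j + (∑ k ∈ S, w k - w i) := by
        rw [Finset.sum_insert hji, Finset.sum_erase_eq_sub hiS]
      simp only [hiS, if_pos, mem_coe, mem_filter, mem_powerset]
      refine ⟨?_, ?_, ?_⟩
      · intro x hx
        rcases mem_insert.mp hx with rfl | hx
        · exact mem_erase.mpr ⟨hne.symm, mem_univ _⟩
        · exact mem_erase.mpr ⟨(mem_erase.mp hx).1, mem_univ _⟩
      · rw [hsum]; linarith
      · rw [hsum]; linarith
    · simp only [hiS, if_neg, not_false_iff, mem_coe, mem_filter, mem_powerset]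
      refine ⟨?_, hlt, by linarith⟩
      intro x hx
      exact mem_erase.mpr ⟨fun h => hiS (h ▸ hx), mem_univ _⟩
  · intro S₁ h₁ S₂ h₂ heq
    simp only [mem_coe, mem_filter, mem_powerset] at h₁ h₂
    have hj₁ : j ∉ S₁ := fun h => (mem_erase.mp (h₁.1 h)).1 rfl
    have hj₂ : j ∉ S₂ := fun h => (mem_erase.mp (h₂.1 h)).1 rfl
    dsimp only at heq
    by_cases hi₁ : i ∈ S₁ <;> by_cases hi₂ : i ∈ S₂ <;>
      simp only [hi₁, hi₂, if_pos, if_neg, not_false_iff] at heq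
    · have : S₁.erase i = S₂.erase i := by
        have h1 : j ∉ S₁.erase i := fun h => hj₁ (mem_of_mem_erase h)
        have h2 : j ∉ S₂.erase i := fun h => hj₂ (mem_of_mem_erase h)
        have := congrArg (fun T => Finset.erase T j) heq
        simpa [Finset.erase_insert h1, Finset.erase_insert h2] using this
      have := congrArg (fun T => insert i T) this
      simpa [Finset.insert_erase hi₁, Finset.insert_erase hi₂] using this
    · exact absurd (heq ▸ mem_insert_self j _) hj₂
    · exact absurd (heq.symm ▸ mem_insert_self j _) hj₁
    · exact heq
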